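/- arXiv:1607.08709 — 4 statements merged into one kernel-verified Lean document; each statement's English description precedes it below -/
import Mathlib

section
/- Let L : (0,1] → ℝ be positive, bounded, continuous on (0,1] and differentiable on (0,1). For d > 0 set g_d(s) := d^s·L(s), and assume that for every d > 0, every s̄ ∈ (0,1) with g_d'(s̄) = 0 is a point of strict local maximum of g_d (i.e. there is δ > 0 such that g_d(s) < g_d(s̄) whenever 0 < |s − s̄| < δ). Then: (i) for every d > 0, g_d' vanishes at most at one point of (0,1), and either g_d is monotone on (0,1] or there is exactly one s* ∈ (0,1) with g_d'(s*) = 0, in which case g_d is nondecreasing on (0,s*] and nonincreasing on [s*,1]; (ii) the limit L_0 := lim_{s→0^+} L(s) exists; (iii) for every d > 0, inf_{s∈(0,1]} g_d(s) = min(d·L(1), L_0); in particular the infimum equals d·L(1) when 0 < d ≤ d* and equals L_0 when d ≥ d*, where d* := L_0/L(1). (This is the abstract structure underlying the conclusion of Theorem 1.2: with L(s) = λ_1(m,1,s) and λ_1(m,d,s) = d^s L(s), once every interior critical point of s ↦ λ_1(m,d,s) is a strict local maximum, the infimum over s ∈ (0,1] is attained either at s = 1 or in the limit s → 0^+, according to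 whether d ≤ d* or d ≥ d*.) -/
open Set Filter


lemma aux_mul_deriv {L L' : ℝ → ℝ} {d : ℝ} (hd : 0 < d) {s : ℝ}
    (hs : HasDerivAt L (L' s) s) :
    HasDerivAt (fun s => d ^ s * L s) (d ^ s * (Real.log d * L s + L' s)) s := by
  have h1 : HasDerivAt (fun s : ℝ => d ^ s) (d ^ s * Real.log d) s :=
    (Real.hasStrictDerivAt_const_rpow hd s).hasDerivAt
  have h2 : HasDerivAt (fun s => d ^ s * L s) (d ^ s * Real.log d * L s + d ^ s * L' s) s :=
    h1.mul hs
  convert h2 using 1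
  ring


lemma aux_structure (g G : ℝ → ℝ)
    (hgc : ContinuousOn g (Set.Ioc (0:ℝ) 1))
    (hg' : ∀ s ∈ Set.Ioo (0:ℝ) 1, HasDerivAt g (G s) s)
    (hmax : ∀ sb ∈ Set.Ioo (0:ℝ) 1, G sb = 0 →
      ∃ δ > 0, ∀ s ∈ Set.Ioc (0:ℝ) 1, s ≠ sb → |s - sb| < δ → g s < g sb) :
    (∀ s₁ ∈ Set.Ioo (0:ℝ) 1, ∀ s₂ ∈ Set.Ioo (0:ℝ) 1, G s₁ = 0 → G s₂ = 0 → s₁ = s₂) ∧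
    ((MonotoneOn g (Set.Ioc (0:ℝ) 1) ∨ AntitoneOn g (Set.Ioc (0:ℝ) 1)) ∨
      ∃ s0 ∈ Set.Ioo (0:ℝ) 1, G s0 = 0 ∧
        MonotoneOn g (Set.Ioc (0:ℝ) s0) ∧ AntitoneOn g (Set.Icc s0 1)) := by
  -- no two distinct critical points
  have no_two : ∀ s₁ ∈ Ioo (0:ℝ) 1, ∀ s₂ ∈ Ioo (0:ℝ) 1, s₁ < s₂ → G s₁ = 0 → G s₂ = 0 → False := by
    intro s₁ h₁ s₂ h₂ hlt hc₁ hc₂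
    have hsub : Icc s₁ s₂ ⊆ Ioc (0:ℝ) 1 := fun x hx => ⟨lt_of_lt_of_le h₁.1 hx.1, hx.2.trans h₂.2.le⟩
    obtain ⟨t, htm, ht⟩ := isCompact_Icc.exists_isMinOn (nonempty_Icc.2 hlt.le) (hgc.mono hsub)
    have htle := isMinOn_iff.1 ht
    obtain ⟨δ₁, hδ₁, h1⟩ := hmax s₁ h₁ hc₁
    obtain ⟨δ₂, hδ₂, h2⟩ := hmax s₂ h₂ hc₂
    have hm1 : 0 < min δ₁ (s₂ - s₁) := lt_min hδ₁ (by linarith)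
    have hm2 : 0 < min δ₂ (s₂ - s₁) := lt_min hδ₂ (by linarith)
    have hm1' := min_le_left δ₁ (s₂ - s₁)
    have hm1'' := min_le_right δ₁ (s₂ - s₁)
    have hm2' := min_le_left δ₂ (s₂ - s₁)
    have hm2'' := min_le_right δ₂ (s₂ - s₁)
    set x₁ := s₁ + min δ₁ (s₂ - s₁) / 2 with hx₁def
    set x₂ := s₂ - min δ₂ (s₂ - s₁) / 2 with hx₂def
    have hx₁gt : s₁ < x₁ := by rw [hx₁def]; linarith
    have hx₁lt : x₁ < s₂ := by rw [hx₁def]; linarith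
    have hx₂gt : s₁ < x₂ := by rw [hx₂def]; linarith
    have hx₂lt : x₂ < s₂ := by rw [hx₂def]; linarith
    have hx₁mem : x₁ ∈ Icc s₁ s₂ := ⟨hx₁gt.le, hx₁lt.le⟩
    have hx₂mem : x₂ ∈ Icc s₁ s₂ := ⟨hx₂gt.le, hx₂lt.le⟩
    have hgx₁ : g x₁ < g s₁ := by
      refine h1 x₁ (hsub hx₁mem) hx₁gt.ne' ?_
      rw [show x₁ - s₁ = min δ₁ (s₂ - s₁) / 2 by rw [hx₁def]; ring, abs_of_pos (by linarith)]
      linarith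
    have hgx₂ : g x₂ < g s₂ := by
      refine h2 x₂ (hsub hx₂mem) hx₂lt.ne ?_
      rw [show x₂ - s₂ = -(min δ₂ (s₂ - s₁) / 2) by rw [hx₂def]; ring, abs_neg,
        abs_of_pos (by linarith)]
      linarith
    have ht1 : s₁ < t := by
      rcases lt_or_eq_of_le htm.1 with h | h
      · exact h
      · exact absurd (htle x₁ hx₁mem) (by rw [← h]; exact not_le.2 hgx₁)
    have ht2 : t < s₂ := by
      rcases lt_or_eq_of_le htm.2 with h | h
      · exact h
      · exact absurd (htle x₂ hx₂mem) (by rw [h]; exact not_le.2 hgx₂)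
    have htIoo : t ∈ Ioo (0:ℝ) 1 := ⟨lt_trans h₁.1 ht1, lt_of_lt_of_le ht2 h₂.2.le⟩
    have hloc : IsLocalMin g t := ht.isLocalMin (Icc_mem_nhds ht1 ht2)
    have hGt : G t = 0 := hloc.hasDerivAt_eq_zero (hg' t htIoo)
    obtain ⟨δ, hδ, hmt⟩ := hmax t htIoo hGt
    have hmy : 0 < min δ (s₂ - t) := lt_min hδ (by linarith)
    have hmy' := min_le_left δ (s₂ - t)
    have hmy'' := min_le_right δ (s₂ - t)
    set y := t + min δ (s₂ - t) / 2 with hydef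
    have hy1 : t < y := by rw [hydef]; linarith
    have hy2 : y < s₂ := by rw [hydef]; linarith
    have hymem : y ∈ Icc s₁ s₂ := ⟨ht1.le.trans hy1.le, hy2.le⟩
    have hgy : g y < g t := by
      refine hmt y (hsub hymem) hy1.ne' ?_
      rw [show y - t = min δ (s₂ - t) / 2 by rw [hydef]; ring, abs_of_pos (by linarith)]
      linarith
    exact absurd (htle y hymem) (not_le.2 hgy)
  have uniq : ∀ s₁ ∈ Ioo (0:ℝ) 1, ∀ s₂ ∈ Ioo (0:ℝ) 1, G s₁ = 0 → G s₂ = 0 → s₁ = s₂ := by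
    intro s₁ h₁ s₂ h₂ hc₁ hc₂
    rcases lt_trichotomy s₁ s₂ with h | h | h
    · exact absurd (no_two s₁ h₁ s₂ h₂ h hc₁ hc₂) not_false
    · exact h
    · exact absurd (no_two s₂ h₂ s₁ h₁ h hc₂ hc₁) not_false
  -- Darboux sign dichotomy
  have darboux : ∀ a b : ℝ, 0 ≤ a → b ≤ 1 → (∀ x ∈ Ioo a b, G x ≠ 0) →
      (∀ x ∈ Ioo a b, G x < 0) ∨ (∀ x ∈ Ioo a b, 0 < G x) := by
    intro a b ha hb hne
    exact hasDerivWithinAt_forall_lt_or_forall_gt_of_forall_ne (convex_Ioo a b)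
      (fun x hx => ((hg' x ⟨lt_of_le_of_lt ha hx.1, lt_of_lt_of_le hx.2 hb⟩).hasDerivWithinAt)) hne
  -- monotonicity helpers
  have monoIoc : ∀ b : ℝ, 0 < b → b ≤ 1 → (∀ x ∈ Ioo (0:ℝ) b, 0 < G x) →
      MonotoneOn g (Ioc (0:ℝ) b) := by
    intro b hb0 hb1 hpos
    refine monotoneOn_of_deriv_nonneg (convex_Ioc 0 b) (hgc.mono (Ioc_subset_Ioc_right hb1)) ?_ ?_
    · rw [interior_Ioc]
      intro x hx
      exact ((hg' x ⟨hx.1, lt_of_lt_of_le hx.2 hb1⟩).differentiableAt).differentiableWithinAt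
    · rw [interior_Ioc]
      intro x hx
      rw [(hg' x ⟨hx.1, lt_of_lt_of_le hx.2 hb1⟩).deriv]
      exact (hpos x hx).le
  have antiIoc : ∀ b : ℝ, 0 < b → b ≤ 1 → (∀ x ∈ Ioo (0:ℝ) b, G x < 0) →
      AntitoneOn g (Ioc (0:ℝ) b) := by
    intro b hb0 hb1 hneg
    refine antitoneOn_of_deriv_nonpos (convex_Ioc 0 b) (hgc.mono (Ioc_subset_Ioc_right hb1)) ?_ ?_
    · rw [interior_Ioc]
      intro x hx
      exact ((hg' x ⟨hx.1, lt_of_lt_of_le hx.2 hb1⟩).differentiableAt).differentiableWithinAt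
    · rw [interior_Ioc]
      intro x hx
      rw [(hg' x ⟨hx.1, lt_of_lt_of_le hx.2 hb1⟩).deriv]
      exact (hneg x hx).le
  have monoIcc : ∀ a : ℝ, 0 < a → a ≤ 1 → (∀ x ∈ Ioo a 1, 0 < G x) →
      MonotoneOn g (Icc a 1) := by
    intro a ha0 ha1 hpos
    have hsub : Icc a 1 ⊆ Ioc (0:ℝ) 1 := fun x hx => ⟨lt_of_lt_of_le ha0 hx.1, hx.2⟩
    refine monotoneOn_of_deriv_nonneg (convex_Icc a 1) (hgc.mono hsub) ?_ ?_
    · rw [interior_Icc]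
      intro x hx
      exact ((hg' x ⟨lt_trans ha0 hx.1, hx.2⟩).differentiableAt).differentiableWithinAt
    · rw [interior_Icc]
      intro x hx
      rw [(hg' x ⟨lt_trans ha0 hx.1, hx.2⟩).deriv]
      exact (hpos x hx).le
  have antiIcc : ∀ a : ℝ, 0 < a → a ≤ 1 → (∀ x ∈ Ioo a 1, G x < 0) →
      AntitoneOn g (Icc a 1) := by
    intro a ha0 ha1 hneg
    have hsub : Icc a 1 ⊆ Ioc (0:ℝ) 1 := fun x hx => ⟨lt_of_lt_of_le ha0 hx.1, hx.2⟩
    refine antitoneOn_of_deriv_nonpos (convex_Icc a 1) (hgc.mono hsub) ?_ ?_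
    · rw [interior_Icc]
      intro x hx
      exact ((hg' x ⟨lt_trans ha0 hx.1, hx.2⟩).differentiableAt).differentiableWithinAt
    · rw [interior_Icc]
      intro x hx
      rw [(hg' x ⟨lt_trans ha0 hx.1, hx.2⟩).deriv]
      exact (hneg x hx).le
  refine ⟨uniq, ?_⟩
  by_cases hex : ∃ s0 ∈ Ioo (0:ℝ) 1, G s0 = 0
  · obtain ⟨s0, hs0, hGs0⟩ := hex
    obtain ⟨δ, hδ, hloc⟩ := hmax s0 hs0 hGs0
    right
    refine ⟨s0, hs0, hGs0, ?_, ?_⟩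
    · -- Monotone on Ioc 0 s0
      have hne : ∀ x ∈ Ioo (0:ℝ) s0, G x ≠ 0 := fun x hx h =>
        absurd (uniq x ⟨hx.1, hx.2.trans hs0.2⟩ s0 hs0 h hGs0) (ne_of_lt hx.2)
      rcases darboux 0 s0 le_rfl hs0.2.le hne with hneg | hpos
      · exfalso
        have hanti := antiIoc s0 hs0.1 hs0.2.le hneg
        have hmy : 0 < min δ s0 := lt_min hδ hs0.1
        have hmy' := min_le_left δ s0
        have hmy'' := min_le_right δ s0
        set y := s0 - min δ s0 / 2 with hydef
        have hy1 : 0 < y := by rw [hydef]; linarith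
        have hy2 : y < s0 := by rw [hydef]; linarith
        have hge : g s0 ≤ g y := hanti ⟨hy1, hy2.le⟩ ⟨hs0.1, le_rfl⟩ hy2.le
        have hlt : g y < g s0 := by
          refine hloc y ⟨hy1, hy2.le.trans hs0.2.le⟩ hy2.ne ?_
          rw [show y - s0 = -(min δ s0 / 2) by rw [hydef]; ring, abs_neg,
            abs_of_pos (by linarith)]
          linarith
        linarith
      · exact monoIoc s0 hs0.1 hs0.2.le hpos
    · -- Antitone on Icc s0 1
      have hne : ∀ x ∈ Ioo s0 1, G x ≠ 0 := fun x hx h =>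
        absurd (uniq x ⟨lt_trans hs0.1 hx.1, hx.2⟩ s0 hs0 h hGs0) (ne_of_gt hx.1)
      rcases darboux s0 1 hs0.1.le le_rfl hne with hneg | hpos
      · exact antiIcc s0 hs0.1 hs0.2.le hneg
      · exfalso
        have hmono := monoIcc s0 hs0.1 hs0.2.le hpos
        have hmy : 0 < min δ (1 - s0) := lt_min hδ (by linarith [hs0.2])
        have hmy' := min_le_left δ (1 - s0)
        have hmy'' := min_le_right δ (1 - s0)
        set y := s0 + min δ (1 - s0) / 2 with hydef
        have hy1 : s0 < y := by rw [hydef]; linarith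
        have hy2 : y < 1 := by rw [hydef]; linarith
        have hge : g s0 ≤ g y := hmono ⟨le_rfl, hs0.2.le⟩ ⟨hy1.le, hy2.le⟩ hy1.le
        have hlt : g y < g s0 := by
          refine hloc y ⟨lt_trans hs0.1 hy1, hy2.le⟩ hy1.ne' ?_
          rw [show y - s0 = min δ (1 - s0) / 2 by rw [hydef]; ring, abs_of_pos (by linarith)]
          linarith
        linarith
  · push_neg at hex
    left
    rcases darboux 0 1 le_rfl le_rfl hex with hneg | hpos
    · exact Or.inr (antiIoc 1 one_pos le_rfl hneg)
    · exact Or.inl (monoIoc 1 one_pos le_rfl hpos)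

/-- abstract structure underlying the conclusion of Theorem 1.2.
`g_d(s) = d^s·L(s)` with `g_d'(s) = d^s (ln d · L(s) + L'(s))`; if every interior
critical point of `g_d` is a strict local maximum, then `g_d` is monotone or has
exactly one interior maximum, the limit `L₀ = lim_{s→0⁺} L(s)` exists, and
`inf_{(0,1]} g_d = min (d·L(1)) L₀`, equal to `d·L(1)` for `d ≤ d* = L₀/L(1)`
and to `L₀` for `d ≥ d*`. -/
theorem stmt_6 (L L' : ℝ → ℝ)
    (hLpos : ∀ s ∈ Set.Ioc (0:ℝ) 1, 0 < L s)
    (hLbdd : ∃ C : ℝ, ∀ s ∈ Set.Ioc (0:ℝ) 1, L s ≤ C)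
    (hLcont : ContinuousOn L (Set.Ioc (0:ℝ) 1))
    (hLderiv : ∀ s ∈ Set.Ioo (0:ℝ) 1, HasDerivAt L (L' s) s)
    (hcrit : ∀ d : ℝ, 0 < d → ∀ sb ∈ Set.Ioo (0:ℝ) 1,
      d ^ sb * (Real.log d * L sb + L' sb) = 0 →
      ∃ δ > 0, ∀ s ∈ Set.Ioc (0:ℝ) 1, s ≠ sb → |s - sb| < δ →
        d ^ s * L s < d ^ sb * L sb) :
    (∀ d : ℝ, 0 < d →
      (∀ s₁ ∈ Set.Ioo (0:ℝ) 1, ∀ s₂ ∈ Set.Ioo (0:ℝ) 1,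
        d ^ s₁ * (Real.log d * L s₁ + L' s₁) = 0 →
        d ^ s₂ * (Real.log d * L s₂ + L' s₂) = 0 → s₁ = s₂) ∧
      ((MonotoneOn (fun s => d ^ s * L s) (Set.Ioc (0:ℝ) 1) ∨
          AntitoneOn (fun s => d ^ s * L s) (Set.Ioc (0:ℝ) 1)) ∨
        ∃ sstar ∈ Set.Ioo (0:ℝ) 1,
          d ^ sstar * (Real.log d * L sstar + L' sstar) = 0 ∧
          MonotoneOn (fun s => d ^ s * L s) (Set.Ioc (0:ℝ) sstar) ∧
          AntitoneOn (fun s => d ^ s * L s) (Set.Icc sstar 1))) ∧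
    (∃ L₀ : ℝ,
      Filter.Tendsto L (nhdsWithin 0 (Set.Ioi (0:ℝ))) (nhds L₀) ∧
      ∀ d : ℝ, 0 < d →
        sInf ((fun s => d ^ s * L s) '' Set.Ioc (0:ℝ) 1) = min (d * L 1) L₀ ∧
        (d ≤ L₀ / L 1 →
          sInf ((fun s => d ^ s * L s) '' Set.Ioc (0:ℝ) 1) = d * L 1) ∧
        (L₀ / L 1 ≤ d →
          sInf ((fun s => d ^ s * L s) '' Set.Ioc (0:ℝ) 1) = L₀)) := by
  
  obtain ⟨C, hC⟩ := hLbdd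
  have hcontpow : ∀ d : ℝ, 0 < d → Continuous fun s : ℝ => d ^ s := by
    intro d hd
    have h : (fun s : ℝ => d ^ s) = fun s => Real.exp (Real.log d * s) := by
      funext s; rw [Real.rpow_def_of_pos hd]
    rw [h]; exact Real.continuous_exp.comp (continuous_const.mul continuous_id)
  have key : ∀ d : ℝ, 0 < d →
      (∀ s₁ ∈ Ioo (0:ℝ) 1, ∀ s₂ ∈ Ioo (0:ℝ) 1,
        d ^ s₁ * (Real.log d * L s₁ + L' s₁) = 0 →
        d ^ s₂ * (Real.log d * L s₂ + L' s₂) = 0 → s₁ = s₂) ∧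
      ((MonotoneOn (fun s => d ^ s * L s) (Ioc (0:ℝ) 1) ∨
          AntitoneOn (fun s => d ^ s * L s) (Ioc (0:ℝ) 1)) ∨
        ∃ s0 ∈ Ioo (0:ℝ) 1, d ^ s0 * (Real.log d * L s0 + L' s0) = 0 ∧
          MonotoneOn (fun s => d ^ s * L s) (Ioc (0:ℝ) s0) ∧
          AntitoneOn (fun s => d ^ s * L s) (Icc s0 1)) := by
    intro d hd
    have hgc : ContinuousOn (fun s => d ^ s * L s) (Ioc (0:ℝ) 1) :=
      ((hcontpow d hd).continuousOn).mul hLcont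
    exact aux_structure (fun s => d ^ s * L s) (fun s => d ^ s * (Real.log d * L s + L' s))
      hgc (fun s hs => aux_mul_deriv hd (hLderiv s hs)) (hcrit d hd)
  refine ⟨fun d hd => key d hd, ?_⟩
  -- existence of the limit L₀
  have hgL : (fun s : ℝ => (1:ℝ) ^ s * L s) = L := by
    funext s; rw [Real.one_rpow, one_mul]
  have hhalf : ∃ b : ℝ, 0 < b ∧ b ≤ 1 ∧
      (MonotoneOn L (Ioc (0:ℝ) b) ∨ AntitoneOn L (Ioc (0:ℝ) 1)) := by
    have h := (key 1 one_pos).2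
    rw [hgL] at h
    rcases h with (h | h) | ⟨s0, hs0, _, hm, _⟩
    · exact ⟨1, one_pos, le_rfl, Or.inl h⟩
    · exact ⟨1, one_pos, le_rfl, Or.inr h⟩
    · exact ⟨s0, hs0.1, hs0.2.le, Or.inl hm⟩
  have hL0 : ∃ L₀ : ℝ, Tendsto L (nhdsWithin 0 (Ioi (0:ℝ))) (nhds L₀) := by
    obtain ⟨b, hb0, hb1, hmono | hanti⟩ := hhalf
    · refine ⟨sInf (L '' Ioo (0:ℝ) b), ?_⟩
      refine MonotoneOn.tendsto_nhdsWithin_Ioo_right (nonempty_Ioo.2 hb0)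
        (hmono.mono Ioo_subset_Ioc_self) ⟨0, ?_⟩
      rintro y ⟨x, hx, rfl⟩
      exact (hLpos x ⟨hx.1, hx.2.le.trans hb1⟩).le
    · refine ⟨sSup (L '' Ioo (0:ℝ) 1), ?_⟩
      refine AntitoneOn.tendsto_nhdsWithin_Ioo_right (nonempty_Ioo.2 one_pos)
        (hanti.mono Ioo_subset_Ioc_self) ⟨C, ?_⟩
      rintro y ⟨x, hx, rfl⟩
      exact hC x ⟨hx.1, hx.2.le⟩
  obtain ⟨L₀, hL₀⟩ := hL0
  refine ⟨L₀, hL₀, ?_⟩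
  intro d hd
  have hL1 : 0 < L 1 := hLpos 1 ⟨one_pos, le_rfl⟩
  have h1mem : (1:ℝ) ∈ Ioc (0:ℝ) 1 := ⟨one_pos, le_rfl⟩
  have hg1 : d ^ (1:ℝ) * L 1 = d * L 1 := by rw [Real.rpow_one]
  have hg0 : Tendsto (fun s => d ^ s * L s) (nhdsWithin 0 (Ioi (0:ℝ))) (nhds L₀) := by
    have h1 : Tendsto (fun s : ℝ => d ^ s) (nhdsWithin 0 (Ioi (0:ℝ))) (nhds 1) := by
      have h2 : Tendsto (fun s : ℝ => d ^ s) (nhdsWithin 0 (Ioi (0:ℝ))) (nhds (d ^ (0:ℝ))) :=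
        ((hcontpow d hd).tendsto 0).mono_left nhdsWithin_le_nhds
      simpa [Real.rpow_zero] using h2
    simpa [one_mul] using h1.mul hL₀
  have hKle : ∀ s ∈ Ioc (0:ℝ) 1, min (d * L 1) L₀ ≤ d ^ s * L s := by
    rcases (key d hd).2 with (hm | ha) | ⟨s0, hs0, _, hm, ha⟩
    · intro s hs
      refine le_trans (min_le_right _ _) (le_of_tendsto hg0 ?_)
      filter_upwards [Ioo_mem_nhdsGT_of_mem ⟨le_refl (0:ℝ), hs.1⟩] with t ht
      exact hm ⟨ht.1, ht.2.le.trans hs.2⟩ hs ht.2.le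
    · intro s hs
      refine le_trans (min_le_left _ _) ?_
      rw [← hg1]
      exact ha hs h1mem hs.2
    · intro s hs
      rcases le_or_gt s s0 with hss | hss
      · refine le_trans (min_le_right _ _) (le_of_tendsto hg0 ?_)
        filter_upwards [Ioo_mem_nhdsGT_of_mem ⟨le_refl (0:ℝ), hs.1⟩] with t ht
        exact hm ⟨ht.1, ht.2.le.trans hss⟩ ⟨hs.1, hss⟩ ht.2.le
      · refine le_trans (min_le_left _ _) ?_
        rw [← hg1]
        exact ha ⟨hss.le, hs.2⟩ ⟨hs0.2.le, le_rfl⟩ hs.2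
  have hne : ((fun s => d ^ s * L s) '' Ioc (0:ℝ) 1).Nonempty :=
    ⟨d ^ (1:ℝ) * L 1, mem_image_of_mem _ h1mem⟩
  have hbdd : BddBelow ((fun s => d ^ s * L s) '' Ioc (0:ℝ) 1) := by
    refine ⟨min (d * L 1) L₀, ?_⟩
    rintro y ⟨x, hx, rfl⟩
    exact hKle x hx
  have h2 : sInf ((fun s => d ^ s * L s) '' Ioc (0:ℝ) 1) ≤ d * L 1 := by
    rw [← hg1]
    exact csInf_le hbdd (mem_image_of_mem _ h1mem)
  have h3 : sInf ((fun s => d ^ s * L s) '' Ioc (0:ℝ) 1) ≤ L₀ := by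
    refine ge_of_tendsto hg0 ?_
    filter_upwards [Ioo_mem_nhdsGT_of_mem ⟨le_refl (0:ℝ), one_pos⟩] with t ht
    exact csInf_le hbdd (mem_image_of_mem _ ⟨ht.1, ht.2.le⟩)
  have hmain : sInf ((fun s => d ^ s * L s) '' Ioc (0:ℝ) 1) = min (d * L 1) L₀ := by
    refine le_antisymm (le_min h2 h3) (le_csInf hne ?_)
    rintro y ⟨x, hx, rfl⟩
    exact hKle x hx
  refine ⟨hmain, fun hdle => ?_, fun hdge => ?_⟩
  · rw [hmain, min_eq_left ((le_div_iff₀ hL1).1 hdle)]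
  · rw [hmain, min_eq_right ((div_le_iff₀ hL1).1 hdge)]
end

section
/- Intermediate estimate in the proof of Lemma 3.6: assume ∫_Ω m < 0 and m ≥ −M almost everywhere in Ω for some constant M > 0. Let ψ ∈ L²(Ω) satisfy ∫ m ψ = 0 and ∫ m ψ² = −1. Then, denoting by ψ̄ := (1/|Ω|)∫_Ω ψ the average of ψ, one has ∫_Ω (ψ − ψ̄)² ≥ 1/M. -/
open MeasureTheory

/-- intermediate estimate in the proof of Lemma 3.6: if `∫ m < 0`,
`m ≥ -M` a.e., `∫ m ψ = 0` and `∫ m ψ² = -1`, then the zero-average part of `ψ`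
satisfies `∫ (ψ - ψ̄)² ≥ 1/M`. -/
theorem stmt_12 {N : ℕ} (Ω : Set (Fin N → ℝ)) (hΩmeas : MeasurableSet Ω)
    (hΩpos : 0 < volume Ω) (hΩfin : volume Ω < ⊤)
    (μm : Measure (Fin N → ℝ)) (hμm : μm = volume.restrict Ω)
    (m : (Fin N → ℝ) → ℝ) (hm_meas : Measurable m) (hm_bdd : ∃ C : ℝ, ∀ x, |m x| ≤ C)
    (M : ℝ) (hM : 0 < M) (hm_low : ∀ᵐ x ∂μm, -M ≤ m x)
    (hm_neg : ∫ x, m x ∂μm < 0)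
    (ψ : (Fin N → ℝ) → ℝ) (hψ : MemLp ψ 2 μm)
    (horth : ∫ x, m x * ψ x ∂μm = 0)
    (hnorm : ∫ x, m x * (ψ x) ^ 2 ∂μm = -1)
    (ψbar : ℝ) (hψbar : ψbar = (∫ x, ψ x ∂μm) / (volume Ω).toReal) :
    1 / M ≤ ∫ x, (ψ x - ψbar) ^ 2 ∂μm := by
  obtain ⟨C, hC⟩ := hm_bdd
  have hμfin : IsFiniteMeasure μm := by
    rw [hμm]
    exact ⟨by simpa [Measure.restrict_apply_univ] using hΩfin⟩
  have hmae : AEStronglyMeasurable m μm := hm_meas.aestronglyMeasurable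
  have hm_int : Integrable m μm :=
    (integrable_const C).mono' hmae (ae_of_all _ fun x => by simpa using hC x)
  have hψ2 : MemLp (fun x => ψ x - ψbar) 2 μm := hψ.sub (memLp_const ψbar)
  have hI : Integrable (fun x => (ψ x - ψbar) ^ 2) μm := by
    simpa [pow_two] using hψ2.integrable_sq
  have hψsq : Integrable (fun x => (ψ x) ^ 2) μm := by
    simpa [pow_two] using hψ.integrable_sq
  have hψint : Integrable ψ μm := hψ.integrable one_le_two
  have hmI : Integrable (fun x => m x * (ψ x - ψbar) ^ 2) μm :=
    hI.bdd_mul hmae (c := C) (ae_of_all _ fun x => by simpa using hC x)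
  have hmψ2 : Integrable (fun x => m x * (ψ x) ^ 2) μm :=
    hψsq.bdd_mul hmae (c := C) (ae_of_all _ fun x => by simpa using hC x)
  have hmψ : Integrable (fun x => m x * ψ x) μm :=
    hψint.bdd_mul hmae (c := C) (ae_of_all _ fun x => by simpa using hC x)
  -- expand
  have hexp : ∫ x, m x * (ψ x - ψbar) ^ 2 ∂μm
      = (∫ x, m x * (ψ x) ^ 2 ∂μm) - 2 * ψbar * (∫ x, m x * ψ x ∂μm)
        + ψbar ^ 2 * (∫ x, m x ∂μm) := by
    have h1 : ∀ x, m x * (ψ x - ψbar) ^ 2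
        = m x * (ψ x) ^ 2 - 2 * ψbar * (m x * ψ x) + ψbar ^ 2 * m x := by
      intro x; ring
    calc ∫ x, m x * (ψ x - ψbar) ^ 2 ∂μm
        = ∫ x, (m x * (ψ x) ^ 2 - 2 * ψbar * (m x * ψ x) + ψbar ^ 2 * m x) ∂μm := by
          simp only [h1]
      _ = (∫ x, (m x * (ψ x) ^ 2 - 2 * ψbar * (m x * ψ x)) ∂μm)
          + ∫ x, ψbar ^ 2 * m x ∂μm :=
          integral_add (hmψ2.sub (hmψ.const_mul _)) (hm_int.const_mul _)
      _ = _ := by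
          rw [integral_sub hmψ2 (hmψ.const_mul _), integral_const_mul, integral_const_mul]
  rw [horth, hnorm] at hexp
  -- lower bound
  have hlow : -M * ∫ x, (ψ x - ψbar) ^ 2 ∂μm ≤ ∫ x, m x * (ψ x - ψbar) ^ 2 ∂μm := by
    rw [← integral_const_mul]
    refine integral_mono_ae (hI.const_mul _) hmI ?_
    filter_upwards [hm_low] with x hx
    exact mul_le_mul_of_nonneg_right hx (sq_nonneg _)
  have hbar : ψbar ^ 2 * (∫ x, m x ∂μm) ≤ 0 :=
    mul_nonpos_of_nonneg_of_nonpos (sq_nonneg _) hm_neg.le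
  rw [div_le_iff₀ hM]
  nlinarith [hlow, hexp, hbar]
end

section
/- Intermediate estimate in the proof of the lower bound (3.2) of Proposition 3.1: assume ∫_Ω m < 0, and let ψ ∈ L²(Ω) satisfy ∫ m ψ = 0 and ∫ m ψ² = 1. Then, denoting by ψ̃ := ψ − (1/|Ω|)∫_Ω ψ the zero-average part of ψ, one has 1 ≤ ( esssup_Ω m + ‖m‖_{L²(Ω)}² / |∫_Ω m| ) · ∫_Ω ψ̃². -/
open MeasureTheory

/-- Cauchy–Schwarz for real integrals, via the discriminant trick. -/
lemma cs_integral {α : Type*} [MeasurableSpace α] {μ : Measure α}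
    {f g : α → ℝ} (hf : MemLp f 2 μ) (hg : MemLp g 2 μ) :
    (∫ x, f x * g x ∂μ) ^ 2 ≤ (∫ x, (f x) ^ 2 ∂μ) * ∫ x, (g x) ^ 2 ∂μ := by
  have hf2 : Integrable (fun x => (f x) ^ 2) μ := by
    simpa [pow_two] using hf.integrable_sq
  have hg2 : Integrable (fun x => (g x) ^ 2) μ := by
    simpa [pow_two] using hg.integrable_sq
  have hsum : Integrable (fun x => (f x + g x) ^ 2) μ := by
    simpa [pow_two] using (hf.add hg).integrable_sq
  have hfg : Integrable (fun x => f x * g x) μ := by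
    have e : (fun x => f x * g x)
        = fun x => ((f x + g x) ^ 2 - (f x) ^ 2 - (g x) ^ 2) / 2 := by
      funext x; ring
    rw [e]; exact ((hsum.sub hf2).sub hg2).div_const 2
  set F := ∫ x, (f x) ^ 2 ∂μ
  set G := ∫ x, (g x) ^ 2 ∂μ
  set I := ∫ x, f x * g x ∂μ
  have key : ∀ a : ℝ, 0 ≤ F * a ^ 2 + (2 * I) * a + G := by
    intro a
    have h1 : Integrable (fun x => (a * f x + g x) ^ 2) μ := by
      have : (fun x => (a * f x + g x) ^ 2)
          = fun x => a ^ 2 * (f x) ^ 2 + 2 * a * (f x * g x) + (g x) ^ 2 := by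
        funext x; ring
      rw [this]
      exact ((hf2.const_mul _).add (hfg.const_mul _)).add hg2
    have h2 : 0 ≤ ∫ x, (a * f x + g x) ^ 2 ∂μ :=
      integral_nonneg fun x => sq_nonneg _
    have h3 : ∫ x, (a * f x + g x) ^ 2 ∂μ = F * a ^ 2 + (2 * I) * a + G := by
      have : (fun x => (a * f x + g x) ^ 2)
          = fun x => a ^ 2 * (f x) ^ 2 + 2 * a * (f x * g x) + (g x) ^ 2 := by
        funext x; ring
      rw [this]
      have e1 : ∫ x, (a ^ 2 * (f x) ^ 2 + 2 * a * (f x * g x)) + (g x) ^ 2 ∂μ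
          = (∫ x, a ^ 2 * (f x) ^ 2 + 2 * a * (f x * g x) ∂μ) + ∫ x, (g x) ^ 2 ∂μ :=
        integral_add ((hf2.const_mul _).add (hfg.const_mul _)) hg2
      have e2 : ∫ x, a ^ 2 * (f x) ^ 2 + 2 * a * (f x * g x) ∂μ
          = (∫ x, a ^ 2 * (f x) ^ 2 ∂μ) + ∫ x, 2 * a * (f x * g x) ∂μ :=
        integral_add (hf2.const_mul _) (hfg.const_mul _)
      rw [e1, e2, integral_const_mul, integral_const_mul]
      ring
    linarith [h3 ▸ h2]
  have hdisc : discrim F (2 * I) G ≤ 0 :=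
    discrim_le_zero fun a => by have := key a; nlinarith [this]
  rw [discrim] at hdisc
  nlinarith [hdisc]

/-- intermediate estimate in the proof of the lower bound (3.2) of
Proposition 3.1: if `∫ m < 0`, `∫ m ψ = 0` and `∫ m ψ² = 1`, then
`1 ≤ (esssup m + ‖m‖²_{L²}/|∫ m|) · ∫ ψ̃²`, where `ψ̃` is the zero-average part
of `ψ`. -/
theorem stmt_13 {N : ℕ} (Ω : Set (Fin N → ℝ)) (hΩmeas : MeasurableSet Ω)
    (hΩpos : 0 < volume Ω) (hΩfin : volume Ω < ⊤)
    (μm : Measure (Fin N → ℝ)) (hμm : μm = volume.restrict Ω)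
    (m : (Fin N → ℝ) → ℝ) (hm_meas : Measurable m) (hm_bdd : ∃ C : ℝ, ∀ x, |m x| ≤ C)
    (hm_neg : ∫ x, m x ∂μm < 0)
    (ψ : (Fin N → ℝ) → ℝ) (hψ : MemLp ψ 2 μm)
    (horth : ∫ x, m x * ψ x ∂μm = 0)
    (hnorm : ∫ x, m x * (ψ x) ^ 2 ∂μm = 1)
    (ψt : (Fin N → ℝ) → ℝ)
    (hψt : ∀ x, ψt x = ψ x - (∫ y, ψ y ∂μm) / (volume Ω).toReal) :
    1 ≤ (essSup m μm + (∫ x, (m x) ^ 2 ∂μm) / |∫ x, m x ∂μm|) *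
      ∫ x, (ψt x) ^ 2 ∂μm := by
  obtain ⟨C, hC⟩ := hm_bdd
  have hfin : IsFiniteMeasure μm := by
    constructor; rw [hμm, Measure.restrict_apply_univ]; exact hΩfin
  set c : ℝ := (∫ y, ψ y ∂μm) / (volume Ω).toReal with hc
  have hmtop : MemLp m ⊤ μm :=
    memLp_top_of_bound hm_meas.aestronglyMeasurable C
      (Filter.Eventually.of_forall fun x => by simpa [Real.norm_eq_abs] using hC x)
  have hm2 : MemLp m 2 μm := hmtop.mono_exponent le_top
  have hψtfun : ψt = fun x => ψ x - c := funext fun x => hψt x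
  have hψt2 : MemLp ψt 2 μm := by rw [hψtfun]; exact hψ.sub (memLp_const c)
  have him : Integrable m μm := hm2.integrable one_le_two
  have hψtsq : Integrable (fun x => (ψt x) ^ 2) μm := by
    simpa [pow_two] using hψt2.integrable_sq
  have hψsq : Integrable (fun x => (ψ x) ^ 2) μm := by
    simpa [pow_two] using hψ.integrable_sq
  have hbdd : ∀ᵐ x ∂μm, ‖m x‖ ≤ C := Filter.Eventually.of_forall fun x => by simpa [Real.norm_eq_abs] using hC x
  have himψ : Integrable (fun x => m x * ψ x) μm :=
    (hψ.integrable one_le_two).bdd_mul hm_meas.aestronglyMeasurable hbdd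
  have himψt2 : Integrable (fun x => m x * (ψt x) ^ 2) μm :=
    hψtsq.bdd_mul hm_meas.aestronglyMeasurable hbdd
  set A : ℝ := ∫ x, m x ∂μm with hA
  set M : ℝ := ∫ x, (m x) ^ 2 ∂μm with hM
  set T : ℝ := ∫ x, (ψt x) ^ 2 ∂μm with hT
  set S : ℝ := essSup m μm with hS
  set B : ℝ := ∫ x, m x * (ψt x) ^ 2 ∂μm with hB
  set I : ℝ := ∫ x, m x * ψt x ∂μm with hI
  -- I = -c * A
  have hIval : I = -c * A := by
    have e : (fun x => m x * ψt x) = fun x => m x * ψ x - c * m x := by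
      funext x; rw [hψt x]; ring
    rw [hI, e, integral_sub himψ (him.const_mul c), integral_const_mul, horth, hA]
    ring
  -- B = 1 + c ^ 2 * A
  have hBval : B = 1 + c ^ 2 * A := by
    have e : (fun x => m x * (ψ x) ^ 2)
        = fun x => m x * (ψt x) ^ 2 + 2 * c * (m x * ψt x) + c ^ 2 * m x := by
      funext x; rw [hψt x]; ring
    have e2 : ∫ x, (m x * (ψt x) ^ 2 + 2 * c * (m x * ψt x)) + c ^ 2 * m x ∂μm
        = (∫ x, m x * (ψt x) ^ 2 + 2 * c * (m x * ψt x) ∂μm) + ∫ x, c ^ 2 * m x ∂μm :=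
      integral_add (himψt2.add (((hψt2.integrable one_le_two).bdd_mul
        hm_meas.aestronglyMeasurable hbdd).const_mul (2 * c))) (him.const_mul _)
    have e3 : ∫ x, m x * (ψt x) ^ 2 + 2 * c * (m x * ψt x) ∂μm
        = (∫ x, m x * (ψt x) ^ 2 ∂μm) + ∫ x, 2 * c * (m x * ψt x) ∂μm := by
      refine integral_add himψt2 ?_
      exact ((hψt2.integrable one_le_two).bdd_mul hm_meas.aestronglyMeasurable
        hbdd).const_mul _
    have := hnorm
    rw [e] at this
    rw [e2, e3, integral_const_mul, integral_const_mul, ← hB, ← hI, ← hA] at this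
    rw [hIval] at this
    nlinarith [this]
  -- essSup bound : B ≤ S * T
  have hbound : Filter.IsBoundedUnder (· ≤ ·) (ae μm) m :=
    Filter.isBoundedUnder_of ⟨C, fun x => (abs_le.mp (hC x)).2⟩
  have hae : ∀ᵐ x ∂μm, m x ≤ S := ae_le_essSup hbound
  have hess : B ≤ S * T := by
    have mono : B ≤ ∫ x, S * (ψt x) ^ 2 ∂μm := by
      refine integral_mono_ae himψt2 (hψtsq.const_mul S) ?_
      filter_upwards [hae] with x hx
      exact mul_le_mul_of_nonneg_right hx (sq_nonneg _)
    rwa [integral_const_mul, ← hT] at mono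
  -- Cauchy-Schwarz : I ^ 2 ≤ M * T
  have hCS : I ^ 2 ≤ M * T := cs_integral hm2 hψt2
  -- conclude
  have hAneg : A < 0 := hm_neg
  have hD : (0:ℝ) < -A := neg_pos.mpr hAneg
  have hTnn : 0 ≤ T := integral_nonneg fun x => sq_nonneg _
  rw [abs_of_neg hAneg]
  have key : -A * 1 ≤ -A * ((S + M / -A) * T) := by
    have hAne : A ≠ 0 := ne_of_lt hAneg
    have expand : -A * ((S + M / -A) * T) = -A * (S * T) + M * T := by
      field_simp
      ring
    rw [expand, mul_one]
    have h1 : -A * B ≤ -A * (S * T) := mul_le_mul_of_nonneg_left hess hD.le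
    have h2 : -A * B = -A - c ^ 2 * A ^ 2 := by rw [hBval]; ring
    have h3 : I ^ 2 = c ^ 2 * A ^ 2 := by rw [hIval]; ring
    linarith [h1, hCS]
  exact le_of_mul_le_mul_left (by simpa using key) hD
end

section
/- Test-function lower bound from the proof of Theorem 1.2: assume ∫_Ω m < 0, and let B ⊆ Ω be measurable with m ≥ δ almost everywhere on B, where δ > 0. Let η ∈ L²(Ω) satisfy η ≥ 0 almost everywhere, η = 0 almost everywhere on Ω∖B, and ∫_Ω η² = 1. Set c := −(∫_Ω m η)/(∫_Ω m) and η̂ := η + c. Then ∫_Ω m η̂² ≥ δ + δ²·(∫_Ω η)² / |∫_Ω m|; in particular ∫_Ω m η̂² ≥ δ > 0. -/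
open MeasureTheory

/-- test-function lower bound from the proof of Theorem 1.2: with
`m ≥ δ` a.e. on `B`, `η ≥ 0` normalized in `L²` and supported in `B`, and
`η̂ = η + c` with `c = -(∫ m η)/(∫ m)`, one has
`∫ m η̂² ≥ δ + δ²(∫ η)²/|∫ m| ≥ δ > 0`. -/
theorem stmt_15 {N : ℕ} (Ω : Set (Fin N → ℝ)) (hΩmeas : MeasurableSet Ω)
    (hΩpos : 0 < volume Ω) (hΩfin : volume Ω < ⊤)
    (μm : Measure (Fin N → ℝ)) (hμm : μm = volume.restrict Ω)
    (m : (Fin N → ℝ) → ℝ) (hm_meas : Measurable m) (hm_bdd : ∃ C : ℝ, ∀ x, |m x| ≤ C)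
    (hm_neg : ∫ x, m x ∂μm < 0)
    (B : Set (Fin N → ℝ)) (hBmeas : MeasurableSet B) (hBΩ : B ⊆ Ω)
    (δ : ℝ) (hδ : 0 < δ) (hmB : ∀ᵐ x ∂μm, x ∈ B → δ ≤ m x)
    (η : (Fin N → ℝ) → ℝ) (hη : MemLp η 2 μm)
    (hηpos : ∀ᵐ x ∂μm, 0 ≤ η x)
    (hηsupp : ∀ᵐ x ∂μm, x ∈ Ω \ B → η x = 0)
    (hηnorm : ∫ x, (η x) ^ 2 ∂μm = 1)
    (c : ℝ) (hc : c = -(∫ x, m x * η x ∂μm) / ∫ x, m x ∂μm) :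
    δ + δ ^ 2 * (∫ x, η x ∂μm) ^ 2 / |∫ x, m x ∂μm| ≤
        ∫ x, m x * (η x + c) ^ 2 ∂μm ∧
      δ ≤ ∫ x, m x * (η x + c) ^ 2 ∂μm := by
  haveI : IsFiniteMeasure μm := by
    subst hμm
    exact ⟨by simpa [Measure.restrict_apply_univ] using hΩfin⟩
  obtain ⟨C, hC⟩ := hm_bdd
  have hmbd : ∃ C : ℝ, ∀ x, ‖m x‖ ≤ C := ⟨C, fun x => hC x⟩
  have hη1 : Integrable η μm := hη.integrable (by norm_num)
  have hη2 : Integrable (fun x => η x ^ 2) μm := by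
    have := (hη.aestronglyMeasurable.aemeasurable.mul
      hη.aestronglyMeasurable.aemeasurable)
    simpa [pow_two] using hη.integrable_sq
  have hmI : Integrable m μm :=
    ⟨hm_meas.aestronglyMeasurable,
      HasFiniteIntegral.of_bounded (C := C) (ae_of_all _ fun x => hC x)⟩
  have hmη : Integrable (fun x => m x * η x) μm :=
    hη1.bdd_mul hm_meas.aestronglyMeasurable (c := C) (ae_of_all _ fun x => hC x)
  have hmη2 : Integrable (fun x => m x * η x ^ 2) μm :=
    hη2.bdd_mul hm_meas.aestronglyMeasurable (c := C) (ae_of_all _ fun x => hC x)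
  -- a.e. membership in Ω
  have hΩae : ∀ᵐ x ∂μm, x ∈ Ω := by
    subst hμm; exact ae_restrict_mem hΩmeas
  set I := ∫ x, m x ∂μm with hI
  set J := ∫ x, m x * η x ∂μm with hJ
  set E := ∫ x, η x ∂μm with hE
  set K := ∫ x, m x * η x ^ 2 ∂μm with hK
  have hEnn : 0 ≤ E := integral_nonneg_of_ae hηpos
  -- δ η ≤ m η a.e.
  have hae1 : ∀ᵐ x ∂μm, δ * η x ≤ m x * η x := by
    filter_upwards [hmB, hηpos, hηsupp, hΩae] with x h1 h2 h3 h4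
    by_cases hxB : x ∈ B
    · exact mul_le_mul_of_nonneg_right (h1 hxB) h2
    · simp [h3 ⟨h4, hxB⟩]
  have hae2 : ∀ᵐ x ∂μm, δ * η x ^ 2 ≤ m x * η x ^ 2 := by
    filter_upwards [hmB, hηsupp, hΩae] with x h1 h3 h4
    by_cases hxB : x ∈ B
    · exact mul_le_mul_of_nonneg_right (h1 hxB) (sq_nonneg _)
    · simp [h3 ⟨h4, hxB⟩]
  have hJge : δ * E ≤ J := by
    have := integral_mono_ae (hη1.const_mul δ) hmη hae1
    simpa [integral_const_mul] using this
  have hKge : δ ≤ K := by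
    have := integral_mono_ae (hη2.const_mul δ) hmη2 hae2
    simpa [integral_const_mul, hηnorm] using this
  have hIne : I ≠ 0 := ne_of_lt hm_neg
  have hnegI : 0 < -I := by linarith
  -- expand the integral
  have hexp : ∫ x, m x * (η x + c) ^ 2 ∂μm = K + 2 * c * J + c ^ 2 * I := by
    have : ∀ x, m x * (η x + c) ^ 2
        = m x * η x ^ 2 + 2 * c * (m x * η x) + c ^ 2 * m x := by
      intro x; ring
    have hInt1 : Integrable (fun x => m x * η x ^ 2 + 2 * c * (m x * η x)) μm :=
      hmη2.add (hmη.const_mul (2 * c))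
    rw [integral_congr_ae (ae_of_all _ this),
      integral_add hInt1 (hmI.const_mul (c ^ 2)),
      integral_add hmη2 (hmη.const_mul (2 * c)), integral_const_mul, integral_const_mul]
  have hcval : 2 * c * J + c ^ 2 * I = J ^ 2 / (-I) := by
    rw [hc]
    field_simp
    ring
  have habs : |I| = -I := abs_of_neg hm_neg
  have hJ2 : δ ^ 2 * E ^ 2 ≤ J ^ 2 := by
    have h0 : 0 ≤ δ * E := mul_nonneg hδ.le hEnn
    calc δ ^ 2 * E ^ 2 = (δ * E) ^ 2 := by ring
      _ ≤ J ^ 2 := by nlinarith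
  have hdiv : δ ^ 2 * E ^ 2 / (-I) ≤ J ^ 2 / (-I) := by gcongr
  have h0 : 0 ≤ J ^ 2 / (-I) := div_nonneg (sq_nonneg _) hnegI.le
  constructor
  · rw [hexp, habs]
    linarith
  · rw [hexp]
    linarith
end
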